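/- arXiv:1801.01998 — 3 statements merged into one kernel-verified Lean document; each statement's English description precedes it below -/
import Mathlib

section
/- In a graph inverse semigroup G(E), for any nonzero elements a, b, the set {x ∈ G(E) : x·a = b} is finite. -/
/-- A directed graph: vertices, edges, source and range maps. -/
structure DGraph where
  V : Type
  E : Type
  s : E → V
  r : E → V

namespace DGraph

variable {Q : DGraph}

/-- `pOk Q a l` : the list of edges `l` forms a valid path starting at vertex `a`. -/
def pOk (Q : DGraph) : Q.V → List Q.E → Prop
  | _, [] => True
  | a, e :: l => Q.s e = a ∧ pOk Q (Q.r e) l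

/-- The end vertex of an edge-list starting at `a`. -/
def pRng (Q : DGraph) (a : Q.V) (l : List Q.E) : Q.V :=
  l.foldl (fun _ e => Q.r e) a

theorem pRng_append (a : Q.V) (l₁ l₂ : List Q.E) :
    pRng Q a (l₁ ++ l₂) = pRng Q (pRng Q a l₁) l₂ :=
  List.foldl_append

theorem pOk_append {a : Q.V} {l₁ l₂ : List Q.E} (h₁ : pOk Q a l₁)
    (h₂ : pOk Q (pRng Q a l₁) l₂) : pOk Q a (l₁ ++ l₂) := by
  induction l₁ generalizing a with
  | nil => simpa [pRng] using h₂
  | cons e l ih =>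
      obtain ⟨he, hl⟩ := h₁
      exact ⟨he, ih hl h₂⟩

theorem pOk_drop {a : Q.V} {l₁ l₂ : List Q.E} (h : pOk Q a (l₁ ++ l₂)) :
    pOk Q (pRng Q a l₁) l₂ := by
  induction l₁ generalizing a with
  | nil => simpa [pRng] using h
  | cons e l ih => exact ih h.2

/-- A (finite, directed) path in the graph `Q`: a start vertex together with a
compatible list of edges.  Paths of length `0` are vertices. -/
structure GPath (Q : DGraph) where
  start : Q.V
  edges : List Q.E
  ok : pOk Q start edges

/-- The source `s(p)` of a path. -/
def GPath.src (p : GPath Q) : Q.V := p.start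

/-- The range `r(p)` of a path. -/
def GPath.rng (p : GPath Q) : Q.V := pRng Q p.start p.edges

/-- The length `|p|` of a path. -/
def GPath.length (p : GPath Q) : ℕ := p.edges.length

/-- The trivial (length zero) path at a vertex `a`. -/
def GPath.triv (Q : DGraph) (a : Q.V) : GPath Q := ⟨a, [], trivial⟩

/-- Concatenation of composable paths. -/
def GPath.comp (p q : GPath Q) (h : p.rng = q.start) : GPath Q :=
  ⟨p.start, p.edges ++ q.edges, pOk_append p.ok (by
    have hq := q.ok
    rw [← h] at hq
    exact hq)⟩

theorem GPath.comp_rng (p q : GPath Q) (h : p.rng = q.start) :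
    (p.comp q h).rng = q.rng := by
  show pRng Q p.start (p.edges ++ q.edges) = q.rng
  rw [pRng_append, show pRng Q p.start p.edges = q.start from h]
  rfl

theorem exists_sub {p q : GPath Q} (h1 : q.start = p.start)
    (h2 : p.edges <+: q.edges) :
    ∃ w : GPath Q, w.start = p.rng ∧ w.rng = q.rng ∧ p.edges ++ w.edges = q.edges := by
  obtain ⟨t, ht⟩ := h2
  have hok : pOk Q p.start (p.edges ++ t) := by rw [ht, ← h1]; exact q.ok
  refine ⟨⟨p.rng, t, pOk_drop hok⟩, rfl, ?_, ht⟩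
  show pRng Q (pRng Q p.start p.edges) t = pRng Q q.start q.edges
  rw [← pRng_append, ht, ← h1]

/-- If the path `q` decomposes as `p·w`, this is the path `w`. -/
noncomputable def subPath (p q : GPath Q) (h1 : q.start = p.start)
    (h2 : p.edges <+: q.edges) : GPath Q :=
  (exists_sub h1 h2).choose

theorem subPath_spec (p q : GPath Q) (h1 : q.start = p.start)
    (h2 : p.edges <+: q.edges) :
    (subPath p q h1 h2).start = p.rng ∧ (subPath p q h1 h2).rng = q.rng ∧
      p.edges ++ (subPath p q h1 h2).edges = q.edges :=
  (exists_sub h1 h2).choose_spec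

/-- The graph inverse semigroup `G(E)` over the graph `Q`: the element `0`
together with the elements `u v⁻¹` where `u, v` are paths with `r(u) = r(v)`. -/
inductive GIS (Q : DGraph) : Type
  | zero : GIS Q
  | elm (u v : GPath Q) (h : u.rng = v.rng) : GIS Q

instance : Zero (GIS Q) := ⟨GIS.zero⟩

-- Multiplication in the graph inverse semigroup:
-- `u₁v₁⁻¹ · u₂v₂⁻¹ = u₁wv₂⁻¹` if `u₂ = v₁w`, `u₁(v₂w)⁻¹` if `v₁ = u₂w`, `0` otherwise.
open Classical in
noncomputable def GIS.mul : GIS Q → GIS Q → GIS Q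
  | .zero, _ => .zero
  | _, .zero => .zero
  | .elm u₁ v₁ h₁, .elm u₂ v₂ h₂ =>
    if hA : u₂.start = v₁.start ∧ v₁.edges <+: u₂.edges then
      GIS.elm (u₁.comp (subPath v₁ u₂ hA.1 hA.2)
          (by rw [(subPath_spec v₁ u₂ hA.1 hA.2).1, h₁]))
        v₂
        (by rw [GPath.comp_rng, (subPath_spec v₁ u₂ hA.1 hA.2).2.1, h₂])
    else if hB : v₁.start = u₂.start ∧ u₂.edges <+: v₁.edges then
      GIS.elm u₁
        (v₂.comp (subPath u₂ v₁ hB.1 hB.2)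
          (by rw [(subPath_spec u₂ v₁ hB.1 hB.2).1, h₂]))
        (by rw [GPath.comp_rng, (subPath_spec u₂ v₁ hB.1 hB.2).2.1, h₁])
    else .zero

noncomputable instance : Mul (GIS Q) := ⟨GIS.mul⟩

/-- The inversion map of the graph inverse semigroup: `(uv⁻¹)⁻¹ = vu⁻¹`, `0⁻¹ = 0`. -/
def GIS.inv : GIS Q → GIS Q
  | .zero => .zero
  | .elm u v h => .elm v u h.symm

/-- The canonical identification of a path `u` with the element `u · r(u)⁻¹` of `G(E)`. -/
def toGIS (p : GPath Q) : GIS Q := GIS.elm p (GPath.triv Q p.rng) rfl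

end DGraph


open DGraph

namespace DGraph

variable {Q : DGraph}

theorem GPath.ext' {p q : GPath Q} (h1 : p.start = q.start) (h2 : p.edges = q.edges) :
    p = q := by
  cases p; cases q
  dsimp at h1 h2
  subst h1; subst h2
  rfl

theorem key {u₁ v₁ u₂ v₂ p q : GPath Q} {h : u₁.rng = v₁.rng} {h₂ : u₂.rng = v₂.rng}
    {h₃ : p.rng = q.rng}
    (heq : (GIS.elm u₁ v₁ h) * (GIS.elm u₂ v₂ h₂) = GIS.elm p q h₃) :
    u₁.start = p.start ∧ u₁.edges <+: p.edges ∧ v₁.start = u₂.start ∧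
      v₁.edges <+: u₂.edges ++ q.edges.drop v₂.edges.length := by
  change GIS.mul _ _ = _ at heq
  unfold GIS.mul at heq
  dsimp only at heq
  split_ifs at heq with hA hB
  · rw [GIS.elm.injEq] at heq
    obtain ⟨h1, h2⟩ := heq
    have hed : p.edges = u₁.edges ++ (subPath v₁ u₂ hA.1 hA.2).edges := by
      rw [← h1]; rfl
    refine ⟨by rw [← h1]; rfl, ⟨_, hed.symm⟩, hA.1.symm, ?_⟩
    exact hA.2.trans (List.prefix_append _ _)
  · rw [GIS.elm.injEq] at heq
    obtain ⟨h1, h2⟩ := heq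
    have hspec := subPath_spec u₂ v₁ hB.1 hB.2
    have hed : q.edges = v₂.edges ++ (subPath u₂ v₁ hB.1 hB.2).edges := by
      rw [← h2]; rfl
    have hdrop : q.edges.drop v₂.edges.length = (subPath u₂ v₁ hB.1 hB.2).edges := by
      rw [hed, List.drop_left]
    exact ⟨by rw [h1], by rw [h1], hB.1, by rw [hdrop, hspec.2.2]⟩

end DGraph

open DGraph

theorem stmt0 (Q : DGraph) (a b : GIS Q) (ha : a ≠ 0) (hb : b ≠ 0) :
    {x : GIS Q | x * a = b}.Finite := by
  obtain ⟨u₂, v₂, h₂⟩ : ∃ u v h, a = GIS.elm u v h := by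
    cases a with
    | zero => exact absurd rfl ha
    | elm u v h => exact ⟨u, v, h, rfl⟩
  obtain ⟨ha', rfl⟩ := h₂
  obtain ⟨p, q, h₃⟩ : ∃ u v h, b = GIS.elm u v h := by
    cases b with
    | zero => exact absurd rfl hb
    | elm u v h => exact ⟨u, v, h, rfl⟩
  obtain ⟨hb', rfl⟩ := h₃
  set S : Set (GIS Q) := {x : GIS Q | x * GIS.elm u₂ v₂ ha' = GIS.elm p q hb'} with hS
  -- every member of S is an elm
  have hmem : ∀ x ∈ S, ∃ u₁ v₁ h, x = GIS.elm u₁ v₁ h ∧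
      u₁.start = p.start ∧ u₁.edges <+: p.edges ∧ v₁.start = u₂.start ∧
      v₁.edges <+: u₂.edges ++ q.edges.drop v₂.edges.length := by
    intro x hx
    cases x with
    | zero =>
        exfalso
        have : GIS.zero * GIS.elm u₂ v₂ ha' = GIS.zero := rfl
        rw [hS, Set.mem_setOf_eq, this] at hx
        exact (by simp : (GIS.zero : GIS Q) ≠ GIS.elm p q hb') hx
    | elm u₁ v₁ h =>
        obtain ⟨k1, k2, k3, k4⟩ := key hx
        exact ⟨u₁, v₁, h, rfl, k1, k2, k3, k4⟩
  classical
  set f : GIS Q → ℕ × ℕ := fun x =>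
    match x with
    | .zero => (0, 0)
    | .elm u v _ => (u.edges.length, v.edges.length) with hf
  apply Set.Finite.of_finite_image (f := f)
  · apply Set.Finite.subset (Set.Finite.prod (Set.finite_Iic p.edges.length)
      (Set.finite_Iic (u₂.edges ++ q.edges.drop v₂.edges.length).length))
    rintro ⟨k, l⟩ ⟨x, hx, hfx⟩
    obtain ⟨u₁, v₁, h, rfl, _, k2, _, k4⟩ := hmem x hx
    simp only [hf] at hfx
    obtain ⟨rfl, rfl⟩ : u₁.edges.length = k ∧ v₁.edges.length = l :=
      Prod.mk.injEq .. ▸ hfx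
    exact ⟨k2.length_le, k4.length_le⟩
  · intro x hx y hy hxy
    obtain ⟨u₁, v₁, h, rfl, a1, a2, a3, a4⟩ := hmem x hx
    obtain ⟨u₁', v₁', h', rfl, b1, b2, b3, b4⟩ := hmem y hy
    simp only [hf] at hxy
    have hlu : u₁.edges.length = u₁'.edges.length := by
      simpa using congrArg Prod.fst hxy
    have hlv : v₁.edges.length = v₁'.edges.length := by
      simpa using congrArg Prod.snd hxy
    have hu : u₁ = u₁' := by
      apply GPath.ext' (a1.trans b1.symm)
      rw [List.prefix_iff_eq_take.mp a2, List.prefix_iff_eq_take.mp b2, hlu]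
    have hv : v₁ = v₁' := by
      apply GPath.ext' (a3.trans b3.symm)
      rw [List.prefix_iff_eq_take.mp a4, List.prefix_iff_eq_take.mp b4, hlv]
    subst hu; subst hv; rfl
end

section
/- In a graph inverse semigroup G(E), for any nonzero elements a, b, the set {x ∈ G(E) : a·x = b} is finite. -/
open DGraph

open Classical in
/-- Packaging function: sends a pair of edge-lists to the corresponding
element of the graph inverse semigroup (or `0` if invalid). -/
noncomputable def auxG {Q : DGraph} (s₁ s₂ : Q.V) (pr : List Q.E × List Q.E) : GIS Q :=
  if h : pOk Q s₁ pr.1 ∧ pOk Q s₂ pr.2 ∧ pRng Q s₁ pr.1 = pRng Q s₂ pr.2 then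
    GIS.elm ⟨s₁, pr.1, h.1⟩ ⟨s₂, pr.2, h.2.1⟩ h.2.2
  else 0

theorem auxG_eq {Q : DGraph} (u v : GPath Q) (h : u.rng = v.rng) (s₁ s₂ : Q.V)
    (hs₁ : u.start = s₁) (hs₂ : v.start = s₂) :
    GIS.elm u v h = auxG s₁ s₂ (u.edges, v.edges) := by
  subst hs₁; subst hs₂
  obtain ⟨a, l, hl⟩ := u
  obtain ⟨b, m, hm⟩ := v
  rw [auxG, dif_pos ⟨hl, hm, h⟩]

theorem stmt1 (Q : DGraph) (a b : GIS Q) (ha : a ≠ 0) (hb : b ≠ 0) :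
    {x : GIS Q | a * x = b}.Finite := by
  obtain ⟨⟩ | ⟨u₁, v₁, h₁⟩ := a
  · exact absurd rfl ha
  obtain ⟨⟩ | ⟨p, q, hpq⟩ := b
  · exact absurd rfl hb
  apply Set.Finite.subset
    (Set.Finite.image (auxG v₁.start q.start)
      (Set.Finite.prod ((v₁.edges ++ p.edges).sublists.finite_toSet)
        (q.edges.sublists.finite_toSet)))
  intro x hx
  simp only [Set.mem_setOf_eq] at hx
  obtain ⟨⟩ | ⟨u₂, v₂, h₂⟩ := x
  · rw [show GIS.elm u₁ v₁ h₁ * GIS.zero = GIS.zero from rfl] at hx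
    exact absurd hx.symm hb
  have hx' : GIS.mul (GIS.elm u₁ v₁ h₁) (GIS.elm u₂ v₂ h₂) = GIS.elm p q hpq := hx
  rw [GIS.mul] at hx'
  have key : u₂.start = v₁.start ∧ v₂.start = q.start ∧
      List.Sublist u₂.edges (v₁.edges ++ p.edges) ∧ List.Sublist v₂.edges q.edges := by
    split_ifs at hx' with hA hB
    · injection hx' with hu hv
      subst hv
      obtain ⟨hws, hwr, hwe⟩ := subPath_spec v₁ u₂ hA.1 hA.2
      have hpe : u₁.edges ++ (subPath v₁ u₂ hA.1 hA.2).edges = p.edges :=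
        congrArg GPath.edges hu
      refine ⟨hA.1, rfl, ?_, List.Sublist.refl _⟩
      rw [← hwe]
      exact (List.Sublist.refl v₁.edges).append
        (List.IsSuffix.sublist ⟨u₁.edges, hpe⟩)
    · injection hx' with hu hv
      have hqe : v₂.edges ++ (subPath u₂ v₁ hB.1 hB.2).edges = q.edges :=
        congrArg GPath.edges hv
      have hqs : ((v₂.comp (subPath u₂ v₁ hB.1 hB.2) _).start : Q.V) = q.start :=
        congrArg GPath.start hv
      refine ⟨hB.1.symm, hqs, ?_, List.IsPrefix.sublist ⟨_, hqe⟩⟩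
      exact hB.2.sublist.trans (List.sublist_append_left _ _)
  obtain ⟨k1, k2, k3, k4⟩ := key
  refine ⟨(u₂.edges, v₂.edges), ⟨?_, ?_⟩, (auxG_eq u₂ v₂ h₂ _ _ k1 k2).symm⟩
  · simpa using k3
  · simpa using k4
end

section
/- Let E be a directed graph and e ∈ E⁰ a vertex. If the cardinality of C₁ᵉ \ {e} equals a cardinal λ > 1, then ⟨Cᵉ⟩, the inverse subsemigroup of G(E) generated by all cycles based at e, is isomorphic to the λ-polycyclic monoid P_λ. -/
namespace DGraph
variable {Q : DGraph}
/-- The inverse subsemigroup of `G(E)` generated by a subset `S`. -/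
inductive genInv (S : Set (GIS Q)) : GIS Q → Prop
  | base {x : GIS Q} : x ∈ S → genInv S x
  | mul {x y : GIS Q} : genInv S x → genInv S y → genInv S (x * y)
  | inv {x : GIS Q} : genInv S x → genInv S (GIS.inv x)

/-- `Cᵉ`: the set of cycles based at `e` (including the trivial path `e`). -/
def Cyc (Q : DGraph) (e : Q.V) : Set (GPath Q) := {u | u.start = e ∧ u.rng = e}

/-- `C₁ᵉ`: cycles based at `e` whose non-trivial proper prefixes do not end at `e`. -/
def Cyc1 (Q : DGraph) (e : Q.V) : Set (GPath Q) :=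
  {u | u ∈ Cyc Q e ∧ ∀ v : GPath Q, v.start = u.start → v.edges <+: u.edges →
      v.edges ≠ [] → v.edges ≠ u.edges → v.rng ≠ e}
end DGraph


namespace DGraph
noncomputable instance {Q : DGraph} (S : Set (GIS Q)) :
    Mul {x : GIS Q // genInv S x} :=
  ⟨fun a b => ⟨a.1 * b.1, genInv.mul a.2 b.2⟩⟩
end DGraph


/-- The `λ`-polycyclic monoid over an index type `ι`: the monoid with zero
`⟨{pᵢ}, {pᵢ⁻¹} | pᵢ⁻¹pᵢ = 1, pⱼ⁻¹pᵢ = 0 for i ≠ j⟩`, realized by pairs of words. -/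
inductive PolyMon (ι : Type) : Type
  | zero : PolyMon ι
  | mk (u v : List ι) : PolyMon ι

open Classical in
noncomputable instance {ι : Type} : Mul (PolyMon ι) :=
  ⟨fun x y =>
    match x, y with
    | .zero, _ => .zero
    | _, .zero => .zero
    | .mk u₁ v₁, .mk u₂ v₂ =>
      if v₁ <+: u₂ then .mk (u₁ ++ u₂.drop v₁.length) v₂
      else if u₂ <+: v₁ then .mk u₁ (v₂ ++ v₁.drop u₂.length)
      else .zero⟩

section AuxDev
open DGraph
variable {Q : DGraph}

theorem GPath.ext' {p q : GPath Q} (h1 : p.start = q.start)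
    (h2 : p.edges = q.edges) : p = q := by
  cases p; cases q; simp_all

theorem elm_congr {u v u' v' : GPath Q} (hu : u = u') (hv : v = v')
    (h : u.rng = v.rng) (h' : u'.rng = v'.rng) :
    GIS.elm u v h = GIS.elm u' v' h' := by subst hu; subst hv; rfl

theorem pOk_prefix {a : Q.V} {l₁ l₂ : List Q.E} (h : pOk Q a (l₁ ++ l₂)) :
    pOk Q a l₁ := by
  induction l₁ generalizing a with
  | nil => trivial
  | cons f l ih => exact ⟨h.1, ih h.2⟩

/-- The set `C₁ᵉ \ {e}`. -/
def Sst (Q : DGraph) (e : Q.V) : Set (GPath Q) := Cyc1 Q e \ {GPath.triv Q e}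

variable {e : Q.V}

theorem SSet_start {c : GPath Q} (hc : c ∈ Sst Q e) : c.start = e := hc.1.1.1

theorem SSet_rng {c : GPath Q} (hc : c ∈ Sst Q e) : c.rng = e := hc.1.1.2

theorem SSet_ne_nil {c : GPath Q} (hc : c ∈ Sst Q e) : c.edges ≠ [] := by
  intro h
  exact hc.2 (GPath.ext' (by rw [SSet_start hc]; rfl) h)

/-- Two elements of `C₁ᵉ\{e}` with edge lists prefixes of a common list are equal. -/
theorem SSet_prefix_eq {c₁ c₂ : GPath Q} (h₁ : c₁ ∈ Sst Q e) (h₂ : c₂ ∈ Sst Q e)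
    (h : c₁.edges <+: c₂.edges) : c₁ = c₂ := by
  by_cases heq : c₁.edges = c₂.edges
  · exact GPath.ext' (by rw [SSet_start h₁, SSet_start h₂]) heq
  · exact absurd (SSet_rng h₁)
      (h₂.1.2 c₁ (by rw [SSet_start h₁, SSet_start h₂]) h (SSet_ne_nil h₁) heq)

theorem SSet_common_prefix {c₁ c₂ : GPath Q} {l : List Q.E}
    (h₁ : c₁ ∈ Sst Q e) (h₂ : c₂ ∈ Sst Q e)
    (p₁ : c₁.edges <+: l) (p₂ : c₂.edges <+: l) : c₁ = c₂ := by
  rcases List.prefix_or_prefix_of_prefix p₁ p₂ with h | h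
  · exact SSet_prefix_eq h₁ h₂ h
  · exact (SSet_prefix_eq h₂ h₁ h).symm

/-- Concatenation of the edge lists of a word over `Sst`. -/
def wEdges (L : List (Sst Q e)) : List Q.E := (L.map (fun c => c.1.edges)).flatten

@[simp] theorem wEdges_nil : wEdges ([] : List (Sst Q e)) = [] := rfl

@[simp] theorem wEdges_cons (c : Sst Q e) (L : List (Sst Q e)) :
    wEdges (c :: L) = c.1.edges ++ wEdges L := rfl

theorem wEdges_append (L₁ L₂ : List (Sst Q e)) :
    wEdges (L₁ ++ L₂) = wEdges L₁ ++ wEdges L₂ := by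
  simp [wEdges]

/-- "Cycle list" predicate. -/
def CL (Q : DGraph) (e : Q.V) (l : List Q.E) : Prop :=
  pOk Q e l ∧ pRng Q e l = e

theorem CL_nil : CL Q e [] := ⟨trivial, rfl⟩

theorem CL_append {l₁ l₂ : List Q.E} (h₁ : CL Q e l₁) (h₂ : CL Q e l₂) :
    CL Q e (l₁ ++ l₂) :=
  ⟨pOk_append h₁.1 (by rw [h₁.2]; exact h₂.1), by rw [pRng_append, h₁.2, h₂.2]⟩

theorem CL_drop {l₁ l₂ : List Q.E} (h : CL Q e (l₁ ++ l₂)) (h₁ : CL Q e l₁) :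
    CL Q e l₂ :=
  ⟨by have := pOk_drop h.1; rwa [h₁.2] at this,
   by have := h.2; rwa [pRng_append, h₁.2] at this⟩

theorem CL_of_mem_Cyc {u : GPath Q} (hu : u ∈ Cyc Q e) : CL Q e u.edges :=
  ⟨by have := u.ok; rwa [hu.1] at this, by have h2 := hu.2; have h1 := hu.1; subst h1; exact h2⟩

theorem CL_SSet {c : GPath Q} (hc : c ∈ Sst Q e) : CL Q e c.edges :=
  CL_of_mem_Cyc hc.1.1

theorem wEdges_CL (L : List (Sst Q e)) : CL Q e (wEdges L) := by
  induction L with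
  | nil => exact CL_nil
  | cons c L ih => rw [wEdges_cons]; exact CL_append (CL_SSet c.2) ih

theorem wEdges_inj {L₁ L₂ : List (Sst Q e)} (h : wEdges L₁ = wEdges L₂) :
    L₁ = L₂ := by
  induction L₁ generalizing L₂ with
  | nil =>
      cases L₂ with
      | nil => rfl
      | cons c L => simp at h; exact absurd h.1 (SSet_ne_nil c.2)
  | cons c L ih =>
      cases L₂ with
      | nil => simp at h; exact absurd h.1 (SSet_ne_nil c.2)
      | cons c' L' =>
          rw [wEdges_cons, wEdges_cons] at h
          have hcc : c.1 = c'.1 :=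
            SSet_common_prefix c.2 c'.2 ⟨wEdges L, rfl⟩ ⟨wEdges L', h.symm⟩
          have : wEdges L = wEdges L' := by
            apply List.append_cancel_left (as := c.1.edges)
            rw [h, hcc]
          rw [Subtype.ext hcc, ih this]

/-- Existence of an initial `C₁` factor of a nonempty cycle list. -/
theorem exists_SSet_prefix {l : List Q.E} (hne : l ≠ []) (hl : CL Q e l) :
    ∃ c : Sst Q e, c.1.edges <+: l := by
  classical
  have hP : ∃ k, 0 < k ∧ pRng Q e (l.take k) = e ∧ k ≤ l.length :=
    ⟨l.length, List.length_pos_iff.2 hne, by rw [List.take_length]; exact hl.2, le_rfl⟩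
  let k := Nat.find hP
  obtain ⟨hk0, hkr, hkl⟩ := Nat.find_spec hP
  have hok : pOk Q e (l.take k) := by
    have := hl.1
    rw [← List.take_append_drop k l] at this
    exact pOk_prefix this
  refine ⟨⟨⟨e, l.take k, hok⟩, ⟨⟨rfl, hkr⟩, ?_⟩, ?_⟩, List.take_prefix _ _⟩
  · -- Cyc1 prefix condition
    intro v hvs hvp hvne hvproper
    have hvlen : v.edges.length < k := by
      have hle : v.edges.length ≤ (l.take k).length := hvp.length_le
      rw [List.length_take] at hle
      have hle' : v.edges.length ≤ k := le_trans hle (min_le_left _ _)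
      rcases lt_or_eq_of_le hle' with h | h
      · exact h
      · exfalso
        apply hvproper
        apply hvp.eq_of_length
        rw [List.length_take, h]
        exact (min_eq_left hkl).symm
    intro hrng
    have hvtake : v.edges = l.take v.edges.length := by
      have : v.edges <+: l := hvp.trans (List.take_prefix _ _)
      rw [List.prefix_iff_eq_take] at this
      exact this
    have hvpos : 0 < v.edges.length := List.length_pos_iff.2 hvne
    apply Nat.find_min hP hvlen
    refine ⟨hvpos, ?_, le_trans (le_of_lt hvlen) hkl⟩
    rw [← hvtake]
    have : v.rng = pRng Q e v.edges := by
      show pRng Q v.start v.edges = _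
      rw [hvs]
    rw [← this]; exact hrng
  · -- not the trivial path
    intro htriv
    have : (l.take k).length = 0 := by
      have := congrArg GPath.edges htriv
      simp [GPath.triv] at this
      simp [this]
    rw [List.length_take] at this
    omega

open Classical in
noncomputable def factAux (Q : DGraph) (e : Q.V) : ℕ → List Q.E → List (Sst Q e)
  | 0, _ => []
  | n+1, l =>
      if h : l ≠ [] ∧ CL Q e l then
        let c := (exists_SSet_prefix h.1 h.2).choose
        c :: factAux Q e n (l.drop c.1.edges.length)
      else []

theorem factAux_spec : ∀ (n : ℕ) (l : List Q.E), l.length ≤ n → CL Q e l →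
    wEdges (factAux Q e n l) = l := by
  intro n
  induction n with
  | zero =>
      intro l hl _
      have : l = [] := List.eq_nil_of_length_eq_zero (Nat.le_zero.1 hl)
      subst this; rfl
  | succ n ih =>
      intro l hl hcl
      by_cases hne : l = []
      · subst hne
        rw [factAux, dif_neg (by simp)]
        rfl
      · rw [factAux, dif_pos ⟨hne, hcl⟩]
        set c := (exists_SSet_prefix hne hcl).choose with hc
        have hcp : c.1.edges <+: l := (exists_SSet_prefix hne hcl).choose_spec
        obtain ⟨t, ht⟩ := hcp
        have hdrop : l.drop c.1.edges.length = t := by rw [← ht, List.drop_left]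
        have hclen : 0 < c.1.edges.length := List.length_pos_iff.2 (SSet_ne_nil c.2)
        have htlen : t.length ≤ n := by
          have : l.length = c.1.edges.length + t.length := by
            rw [← ht, List.length_append]
          omega
        have htcl : CL Q e t := CL_drop (by rwa [ht]) (CL_SSet c.2)
        rw [wEdges_cons, hdrop, ih t htlen htcl, ht]

/-- Factorization of a cycle list. -/
noncomputable def fact (Q : DGraph) (e : Q.V) (l : List Q.E) : List (Sst Q e) :=
  factAux Q e l.length l

theorem fact_spec {l : List Q.E} (h : CL Q e l) : wEdges (fact Q e l) = l :=
  factAux_spec _ _ le_rfl h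

theorem fact_wEdges (L : List (Sst Q e)) : fact Q e (wEdges L) = L :=
  wEdges_inj (fact_spec (wEdges_CL L))

theorem fact_append {l₁ l₂ : List Q.E} (h₁ : CL Q e l₁) (h₂ : CL Q e l₂) :
    fact Q e (l₁ ++ l₂) = fact Q e l₁ ++ fact Q e l₂ :=
  wEdges_inj (by rw [fact_spec (CL_append h₁ h₂), wEdges_append,
    fact_spec h₁, fact_spec h₂])

theorem fact_prefix_iff {l₁ l₂ : List Q.E} (h₁ : CL Q e l₁) (h₂ : CL Q e l₂) :
    l₁ <+: l₂ ↔ fact Q e l₁ <+: fact Q e l₂ := by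
  constructor
  · rintro ⟨t, ht⟩
    have htcl : CL Q e t := CL_drop (by rwa [ht]) h₁
    exact ⟨fact Q e t, by rw [← fact_append h₁ htcl, ht]⟩
  · rintro ⟨T, hT⟩
    refine ⟨wEdges T, ?_⟩
    rw [← fact_spec h₁, ← wEdges_append, hT]
    exact fact_spec h₂


/-! ### Multiplication lemmas -/

theorem GIS_mul_def (x y : GIS Q) : x * y = GIS.mul x y := rfl

@[simp] theorem GIS_zero_mul (x : GIS Q) : GIS.mul GIS.zero x = GIS.zero := by
  cases x <;> rfl

@[simp] theorem GIS_mul_zero (x : GIS Q) : GIS.mul x GIS.zero = GIS.zero := by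
  cases x <;> rfl

theorem mul_elm_A {u₁ v₁ u₂ v₂ : GPath Q} {h₁ : u₁.rng = v₁.rng}
    {h₂ : u₂.rng = v₂.rng} (hs : u₂.start = v₁.start) (hp : v₁.edges <+: u₂.edges) :
    GIS.mul (GIS.elm u₁ v₁ h₁) (GIS.elm u₂ v₂ h₂) =
      GIS.elm (u₁.comp (subPath v₁ u₂ hs hp)
          (by rw [(subPath_spec v₁ u₂ hs hp).1, h₁])) v₂
        (by rw [GPath.comp_rng, (subPath_spec v₁ u₂ hs hp).2.1, h₂]) := by
  rw [GIS.mul, dif_pos ⟨hs, hp⟩]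

theorem mul_elm_B {u₁ v₁ u₂ v₂ : GPath Q} {h₁ : u₁.rng = v₁.rng}
    {h₂ : u₂.rng = v₂.rng} (hA : ¬(u₂.start = v₁.start ∧ v₁.edges <+: u₂.edges))
    (hs : v₁.start = u₂.start) (hp : u₂.edges <+: v₁.edges) :
    GIS.mul (GIS.elm u₁ v₁ h₁) (GIS.elm u₂ v₂ h₂) =
      GIS.elm u₁ (v₂.comp (subPath u₂ v₁ hs hp)
          (by rw [(subPath_spec u₂ v₁ hs hp).1, h₂]))
        (by rw [GPath.comp_rng, (subPath_spec u₂ v₁ hs hp).2.1, h₁]) := by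
  rw [GIS.mul, dif_neg hA, dif_pos ⟨hs, hp⟩]

theorem mul_elm_zero {u₁ v₁ u₂ v₂ : GPath Q} {h₁ : u₁.rng = v₁.rng}
    {h₂ : u₂.rng = v₂.rng} (hA : ¬(u₂.start = v₁.start ∧ v₁.edges <+: u₂.edges))
    (hB : ¬(v₁.start = u₂.start ∧ u₂.edges <+: v₁.edges)) :
    GIS.mul (GIS.elm u₁ v₁ h₁) (GIS.elm u₂ v₂ h₂) = GIS.zero := by
  rw [GIS.mul, dif_neg hA, dif_neg hB]

theorem triv_mem_Cyc {u : GPath Q} (hu : u ∈ Cyc Q e) :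
    GPath.triv Q u.rng ∈ Cyc Q e := by
  constructor
  · exact hu.2
  · exact hu.2

/-- Characterization of the inverse subsemigroup generated by `Cᵉ`. -/
theorem genInv_iff (hnt : ∃ c₁ c₂ : Sst Q e, c₁ ≠ c₂) (x : GIS Q) :
    genInv (toGIS '' Cyc Q e) x ↔
      x = GIS.zero ∨ ∃ (u v : GPath Q) (h : u.rng = v.rng),
        u ∈ Cyc Q e ∧ v ∈ Cyc Q e ∧ x = GIS.elm u v h := by
  constructor
  · intro hx
    induction hx with
    | base hmem =>
        obtain ⟨u, hu, rfl⟩ := hmem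
        exact Or.inr ⟨u, GPath.triv Q u.rng, rfl, hu, triv_mem_Cyc hu, rfl⟩
    | mul hx hy ihx ihy =>
        rcases ihx with rfl | ⟨u, v, h, hu, hv, rfl⟩
        · left; rw [GIS_mul_def, GIS_zero_mul]
        rcases ihy with rfl | ⟨u', v', h', hu', hv', rfl⟩
        · left; rw [GIS_mul_def, GIS_mul_zero]
        rw [GIS_mul_def]
        by_cases hA : u'.start = v.start ∧ v.edges <+: u'.edges
        · rw [mul_elm_A hA.1 hA.2]
          refine Or.inr ⟨_, _, _, ?_, hv', rfl⟩
          refine ⟨hu.1, ?_⟩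
          show (GPath.comp _ _ _).rng = e
          rw [GPath.comp_rng, (subPath_spec v u' hA.1 hA.2).2.1]
          exact hu'.2
        · by_cases hB : v.start = u'.start ∧ u'.edges <+: v.edges
          · rw [mul_elm_B hA hB.1 hB.2]
            refine Or.inr ⟨_, _, _, hu, ?_, rfl⟩
            refine ⟨hv'.1, ?_⟩
            show (GPath.comp _ _ _).rng = e
            rw [GPath.comp_rng, (subPath_spec u' v hB.1 hB.2).2.1]
            exact hv.2
          · rw [mul_elm_zero hA hB]
            left; rfl
    | inv hx ihx =>
        rcases ihx with rfl | ⟨u, v, h, hu, hv, rfl⟩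
        · left; rfl
        · exact Or.inr ⟨v, u, h.symm, hv, hu, rfl⟩
  · intro hx
    rcases hx with rfl | ⟨u, v, h, hu, hv, rfl⟩
    · -- zero is in the subsemigroup
      obtain ⟨c₁, c₂, hne⟩ := hnt
      have h0 : (GIS.zero : GIS Q) =
          (toGIS c₁.1).inv * toGIS c₂.1 := by
        rw [GIS_mul_def]
        show GIS.zero = GIS.mul (GIS.elm (GPath.triv Q c₁.1.rng) c₁.1 rfl.symm.symm)
          (GIS.elm c₂.1 (GPath.triv Q c₂.1.rng) rfl)
        refine (mul_elm_zero ?_ ?_).symm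
        · rintro ⟨_, hp⟩
          exact hne (Subtype.ext (SSet_prefix_eq c₁.2 c₂.2 hp))
        · rintro ⟨_, hp⟩
          exact hne (Subtype.ext (SSet_prefix_eq c₁.2 c₂.2
            ((SSet_prefix_eq c₂.2 c₁.2 hp) ▸ List.prefix_refl _)))
      rw [h0]
      exact genInv.mul (genInv.inv (genInv.base ⟨c₁.1, c₁.2.1.1, rfl⟩))
        (genInv.base ⟨c₂.1, c₂.2.1.1, rfl⟩)
    · have hrepr : GIS.elm u v h = toGIS u * (toGIS v).inv := by
        rw [GIS_mul_def]
        show _ = GIS.mul (GIS.elm u (GPath.triv Q u.rng) rfl)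
          (GIS.elm (GPath.triv Q v.rng) v rfl.symm)
        have hs : (GPath.triv Q v.rng).start = (GPath.triv Q u.rng).start := by
          show v.rng = u.rng; exact h.symm
        have hp : (GPath.triv Q u.rng).edges <+: (GPath.triv Q v.rng).edges :=
          List.prefix_refl _
        refine Eq.trans ?_ (mul_elm_A hs hp).symm
        apply elm_congr _ rfl
        apply GPath.ext'
        · rfl
        · show u.edges = u.edges ++ _
          have hsub := (subPath_spec (GPath.triv Q u.rng) (GPath.triv Q v.rng) hs hp).2.2
          have hnil : (subPath (GPath.triv Q u.rng) (GPath.triv Q v.rng) hs hp).edges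
              = [] := by simpa [GPath.triv] using hsub
          rw [hnil, List.append_nil]
      rw [hrepr]
      exact genInv.mul (genInv.base ⟨u, hu, rfl⟩)
        (genInv.inv (genInv.base ⟨v, hv, rfl⟩))

/-! ### PolyMon multiplication lemmas -/

theorem pm_zero_mul {ι : Type} (x : PolyMon ι) :
    PolyMon.zero * x = PolyMon.zero := by cases x <;> rfl

theorem pm_mul_zero {ι : Type} (x : PolyMon ι) :
    x * PolyMon.zero = PolyMon.zero := by cases x <;> rfl

theorem pm_mul_expand {ι : Type} (u₁ v₁ u₂ v₂ : List ι) :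
    PolyMon.mk u₁ v₁ * PolyMon.mk u₂ v₂ =
      @ite _ (v₁ <+: u₂)
        (@List.instDecidableIsPrefixOfDecidableEq ι
          (fun a b => Classical.propDecidable (a = b)) v₁ u₂)
        (PolyMon.mk (u₁ ++ u₂.drop v₁.length) v₂)
        (@ite _ (u₂ <+: v₁)
          (@List.instDecidableIsPrefixOfDecidableEq ι
            (fun a b => Classical.propDecidable (a = b)) u₂ v₁)
          (PolyMon.mk u₁ (v₂ ++ v₁.drop u₂.length)) PolyMon.zero) := rfl

theorem pm_mul_A {ι : Type} {u₁ v₁ u₂ v₂ : List ι} (h : v₁ <+: u₂) :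
    PolyMon.mk u₁ v₁ * PolyMon.mk u₂ v₂ =
      PolyMon.mk (u₁ ++ u₂.drop v₁.length) v₂ := by
  rw [pm_mul_expand, if_pos h]

theorem pm_mul_B {ι : Type} {u₁ v₁ u₂ v₂ : List ι} (hA : ¬ v₁ <+: u₂)
    (h : u₂ <+: v₁) :
    PolyMon.mk u₁ v₁ * PolyMon.mk u₂ v₂ =
      PolyMon.mk u₁ (v₂ ++ v₁.drop u₂.length) := by
  rw [pm_mul_expand, if_neg hA, if_pos h]

theorem pm_mul_zero' {ι : Type} {u₁ v₁ u₂ v₂ : List ι} (hA : ¬ v₁ <+: u₂)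
    (hB : ¬ u₂ <+: v₁) :
    PolyMon.mk u₁ v₁ * PolyMon.mk u₂ v₂ = PolyMon.zero := by
  rw [pm_mul_expand, if_neg hA, if_neg hB]

/-! ### The word map -/

variable {ι : Type}

noncomputable def word (σ : ι ≃ Sst Q e) (u : GPath Q) : List ι :=
  (fact Q e u.edges).map σ.symm

theorem word_inj {σ : ι ≃ Sst Q e} {u v : GPath Q} (hu : u ∈ Cyc Q e)
    (hv : v ∈ Cyc Q e) (h : word σ u = word σ v) : u = v := by
  have hf : fact Q e u.edges = fact Q e v.edges := by
    have h2 := congrArg (List.map σ) h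
    simpa [word, List.map_map] using h2
  have he : u.edges = v.edges := by
    rw [← fact_spec (CL_of_mem_Cyc hu), ← fact_spec (CL_of_mem_Cyc hv), hf]
  exact GPath.ext' (by rw [hu.1, hv.1]) he

theorem word_prefix_iff {σ : ι ≃ Sst Q e} {u v : GPath Q} (hu : u ∈ Cyc Q e)
    (hv : v ∈ Cyc Q e) : u.edges <+: v.edges ↔ word σ u <+: word σ v := by
  rw [fact_prefix_iff (CL_of_mem_Cyc hu) (CL_of_mem_Cyc hv)]
  constructor
  · intro h; exact List.IsPrefix.map _ h
  · intro h
    have h2 := List.IsPrefix.map σ h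
    simpa [word, List.map_map] using h2

theorem word_edges_append {σ : ι ≃ Sst Q e} {u w x : GPath Q}
    (hu : CL Q e u.edges) (hw : CL Q e w.edges)
    (hx : x.edges = u.edges ++ w.edges) :
    word σ x = word σ u ++ word σ w := by
  unfold word
  rw [hx, fact_append hu hw, List.map_append]

theorem word_wEdges {σ : ι ≃ Sst Q e} {x : GPath Q} {l : List ι}
    (hx : x.edges = wEdges (l.map σ)) : word σ x = l := by
  unfold word
  rw [hx, fact_wEdges, List.map_map]
  simp

theorem word_comp {σ : ι ≃ Sst Q e} {u w : GPath Q} (hu : CL Q e u.edges)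
    (hw : CL Q e w.edges) (hc : u.rng = w.start) :
    word σ (u.comp w hc) = word σ u ++ word σ w :=
  word_edges_append hu hw rfl

/-- The underlying map of the isomorphism, on all of `G(E)`. -/
noncomputable def gMap (σ : ι ≃ Sst Q e) : GIS Q → PolyMon ι
  | .zero => .zero
  | .elm u v _ => .mk (word σ u) (word σ v)

@[simp] theorem gMap_zero (σ : ι ≃ Sst Q e) : gMap σ GIS.zero = PolyMon.zero := rfl

@[simp] theorem gMap_elm (σ : ι ≃ Sst Q e) (u v : GPath Q) (h : u.rng = v.rng) :
    gMap σ (GIS.elm u v h) = PolyMon.mk (word σ u) (word σ v) := rfl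

end AuxDev



open DGraph

theorem stmt5 (Q : DGraph) (e : Q.V) (ι : Type)
    (hcard : Nonempty (ι ≃ ↥(Cyc1 Q e \ {GPath.triv Q e})))
    (hgt : 1 < Cardinal.mk ι) :
    ∃ f : {x : GIS Q // genInv (toGIS '' Cyc Q e) x} ≃ PolyMon ι,
      ∀ a b, f (a * b) = f a * f b := by
  classical
  obtain ⟨σ⟩ := hcard
  have σ' : ι ≃ ↥(Sst Q e) := σ
  have hnt : ∃ c₁ c₂ : Sst Q e, c₁ ≠ c₂ := by
    have hnt' : Nontrivial ι := Cardinal.one_lt_iff_nontrivial.mp hgt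
    obtain ⟨i, j, hij⟩ := hnt'
    exact ⟨σ' i, σ' j, fun hc => hij (σ'.injective hc)⟩
  have hinj : Function.Injective
      (fun x : {x : GIS Q // genInv (toGIS '' Cyc Q e) x} => gMap σ' x.1) := by
    rintro ⟨x, hx⟩ ⟨y, hy⟩ hxy
    apply Subtype.ext
    change gMap σ' x = gMap σ' y at hxy
    rcases (genInv_iff hnt x).1 hx with rfl | ⟨u, v, h, hu, hv, rfl⟩ <;>
      rcases (genInv_iff hnt y).1 hy with rfl | ⟨u', v', h', hu', hv', rfl⟩
    · rfl
    · rw [gMap_zero, gMap_elm] at hxy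
      exact nomatch hxy
    · rw [gMap_zero, gMap_elm] at hxy
      exact nomatch hxy
    · rw [gMap_elm, gMap_elm] at hxy
      injection hxy with h1 h2
      exact elm_congr (word_inj hu hu' h1) (word_inj hv hv' h2) _ _
  have hsurj : Function.Surjective
      (fun x : {x : GIS Q // genInv (toGIS '' Cyc Q e) x} => gMap σ' x.1) := by
    intro y
    cases y with
    | zero => exact ⟨⟨GIS.zero, (genInv_iff hnt _).2 (Or.inl rfl)⟩, rfl⟩
    | mk l₁ l₂ =>
        refine ⟨⟨GIS.elm ⟨e, wEdges (l₁.map σ'), (wEdges_CL _).1⟩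
          ⟨e, wEdges (l₂.map σ'), (wEdges_CL _).1⟩ ?_, ?_⟩, ?_⟩
        · show pRng Q e _ = pRng Q e _
          rw [(wEdges_CL (l₁.map σ')).2, (wEdges_CL (l₂.map σ')).2]
        · refine (genInv_iff hnt _).2 (Or.inr ⟨_, _, _, ?_, ?_, rfl⟩)
          · exact ⟨rfl, (wEdges_CL _).2⟩
          · exact ⟨rfl, (wEdges_CL _).2⟩
        · show gMap σ' _ = _
          rw [gMap_elm, word_wEdges rfl, word_wEdges rfl]
  refine ⟨Equiv.ofBijective _ ⟨hinj, hsurj⟩, ?_⟩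
  rintro ⟨x, hx⟩ ⟨y, hy⟩
  show gMap σ' (x * y) = gMap σ' x * gMap σ' y
  rcases (genInv_iff hnt x).1 hx with rfl | ⟨u, v, h, hu, hv, rfl⟩
  · rw [GIS_mul_def, GIS_zero_mul, gMap_zero, pm_zero_mul]
  rcases (genInv_iff hnt y).1 hy with rfl | ⟨u', v', h', hu', hv', rfl⟩
  · rw [GIS_mul_def, GIS_mul_zero, gMap_zero, gMap_elm, pm_mul_zero]
  rw [GIS_mul_def, gMap_elm, gMap_elm]
  have hs : u'.start = v.start := by rw [hu'.1, hv.1]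
  by_cases hp : v.edges <+: u'.edges
  · rw [mul_elm_A hs hp, gMap_elm, pm_mul_A ((word_prefix_iff hv hu').1 hp)]
    congr 1
    have hspec := subPath_spec v u' hs hp
    have hsubCL : CL Q e (subPath v u' hs hp).edges :=
      CL_drop (by rw [hspec.2.2]; exact CL_of_mem_Cyc hu') (CL_of_mem_Cyc hv)
    have hu'w : word σ' u' = word σ' v ++ word σ' (subPath v u' hs hp) :=
      word_edges_append (CL_of_mem_Cyc hv) hsubCL hspec.2.2.symm
    rw [word_comp (CL_of_mem_Cyc hu) hsubCL, hu'w, List.drop_left]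
  · have hA : ¬(u'.start = v.start ∧ v.edges <+: u'.edges) := fun hc => hp hc.2
    by_cases hq : u'.edges <+: v.edges
    · rw [mul_elm_B hA hs.symm hq, gMap_elm,
        pm_mul_B (fun hc => hp ((word_prefix_iff hv hu').2 hc))
          ((word_prefix_iff hu' hv).1 hq)]
      congr 1
      have hspec := subPath_spec u' v hs.symm hq
      have hsubCL : CL Q e (subPath u' v hs.symm hq).edges :=
        CL_drop (by rw [hspec.2.2]; exact CL_of_mem_Cyc hv) (CL_of_mem_Cyc hu')
      have hvw : word σ' v = word σ' u' ++ word σ' (subPath u' v hs.symm hq) :=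
        word_edges_append (CL_of_mem_Cyc hu') hsubCL hspec.2.2.symm
      rw [word_comp (CL_of_mem_Cyc hv') hsubCL, hvw, List.drop_left]
    · have hB : ¬(v.start = u'.start ∧ u'.edges <+: v.edges) := fun hc => hq hc.2
      rw [mul_elm_zero hA hB, gMap_zero,
        pm_mul_zero' (fun hc => hp ((word_prefix_iff hv hu').2 hc))
          (fun hc => hq ((word_prefix_iff hu' hv).2 hc))]
end
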